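/- For every nonnegative integer n: Σ_{k=0}^n q^{k²} / (((q;q)_k)² (q;q)_{n−k}) = 1/((q;q)_n)². -/

import Mathlib

open Finset

noncomputable def qp (x q : ℂ) (n : ℕ) : ℂ := ∏ j ∈ Finset.range n, (1 - x * q ^ j)

noncomputable def qpinf (x q : ℂ) : ℂ := ∏' j : ℕ, (1 - x * q ^ j)

noncomputable def qbinom (q : ℂ) (n k : ℕ) : ℂ := qp q q n / (qp q q k * qp q q (n - k))

noncomputable def RS (a b q : ℂ) (n : ℕ) : ℂ :=
  ∑ k ∈ Finset.range (n + 1), qbinom q n k * a ^ k * b ^ (n - k)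

noncomputable def Tsum (q : ℂ) (r n s : ℕ) : ℂ :=
  ∑ k ∈ Finset.range (n + 1),
    qp (q ^ (-(2 * (n : ℤ)))) (q ^ 2) k / (qp q q k * qp (q ^ ((1 : ℤ) + r - n)) q k)
      * q ^ ((2 - (s : ℤ)) * k)

noncomputable def gam (q : ℂ) (n : ℕ) : ℂ :=
  ∑ k ∈ Finset.range (n + 1), qbinom q n k * q ^ (k ^ 2) / qp (-q) q k

lemma one_sub_qpow_ne (q : ℂ) (hq : ‖q‖ < 1) (j : ℕ) : (1 : ℂ) - q ^ (j + 1) ≠ 0 := by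
  intro h
  have h1 : q ^ (j + 1) = 1 := by linear_combination -h
  have h2 : ‖q ^ (j + 1)‖ < 1 := by
    rw [norm_pow]
    exact pow_lt_one₀ (norm_nonneg q) hq (Nat.succ_ne_zero j)
  rw [h1] at h2
  simp at h2

lemma qp_ne (q : ℂ) (hq : ‖q‖ < 1) (n : ℕ) : qp q q n ≠ 0 := by
  rw [qp]
  apply Finset.prod_ne_zero_iff.mpr
  intro j _
  have h := one_sub_qpow_ne q hq j
  rwa [pow_succ'] at h

lemma qp_succ (q : ℂ) (n : ℕ) : qp q q (n + 1) = qp q q n * (1 - q ^ (n + 1)) := by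
  rw [qp, qp, Finset.prod_range_succ, pow_succ']

lemma qp_zero (q : ℂ) : qp q q 0 = 1 := by simp [qp]

lemma qbinom_zero (q : ℂ) (hq : ‖q‖ < 1) (n : ℕ) : qbinom q n 0 = 1 := by
  rw [qbinom, qp_zero]
  simp
  exact qp_ne q hq n

lemma qbinom_self (q : ℂ) (hq : ‖q‖ < 1) (n : ℕ) : qbinom q n n = 1 := by
  rw [qbinom]
  simp [qp_zero]
  exact qp_ne q hq n

lemma pascal (q : ℂ) (hq : ‖q‖ < 1) (a b : ℕ) :
    qbinom q (a + b + 2) (a + 1)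
      = q ^ (a + 1) * qbinom q (a + b + 1) (a + 1) + qbinom q (a + b + 1) a := by
  have h1 : (a + b + 2) - (a + 1) = b + 1 := by omega
  have h2 : (a + b + 1) - (a + 1) = b := by omega
  have h3 : (a + b + 1) - a = b + 1 := by omega
  have e1 : qp q q (a + b + 2) = qp q q (a + b + 1) * (1 - q ^ (a + b + 2)) := by
    rw [show a + b + 2 = (a + b + 1) + 1 from by omega]
    exact qp_succ q (a + b + 1)
  rw [qbinom, qbinom, qbinom, h1, h2, h3, e1, qp_succ q a, qp_succ q b]
  have na := qp_ne q hq a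
  have nb := qp_ne q hq b
  have nab := qp_ne q hq (a + b + 1)
  have oa := one_sub_qpow_ne q hq a
  have ob := one_sub_qpow_ne q hq b
  field_simp
  ring

lemma sum_shift (f A B : ℕ → ℂ) (n : ℕ) (h0 : f 0 = A 0) (htop : f (n + 1) = B n)
    (hmid : ∀ j < n, f (j + 1) = A (j + 1) + B j) :
    ∑ k ∈ Finset.range (n + 2), f k
      = (∑ k ∈ Finset.range (n + 1), A k) + ∑ k ∈ Finset.range (n + 1), B k := by
  rw [Finset.sum_range_succ' f (n + 1), Finset.sum_range_succ (fun j => f (j + 1)) n,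
      Finset.sum_range_succ' A n, Finset.sum_range_succ B n]
  rw [h0, htop]
  have h : ∑ k ∈ Finset.range n, f (k + 1) = ∑ k ∈ Finset.range n, (A (k + 1) + B k) :=
    Finset.sum_congr rfl (fun j hj => hmid j (Finset.mem_range.mp hj))
  rw [h, Finset.sum_add_distrib]
  ring

noncomputable def Fa (q : ℂ) (n m : ℕ) : ℂ :=
  ∑ k ∈ Finset.range (n + 1), qbinom q n k * q ^ (k ^ 2 + m * k) / qp q q (k + m)

lemma Fa_step (q : ℂ) (hq : ‖q‖ < 1) (n m : ℕ) :
    Fa q (n + 1) m = Fa q n (m + 1) := by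
  have key : Fa q (n + 1) m
      = (∑ k ∈ Finset.range (n + 1),
          (q ^ k * qbinom q n k * q ^ (k ^ 2 + m * k) / qp q q (k + m)))
        + ∑ k ∈ Finset.range (n + 1),
            (qbinom q n k * q ^ ((k + 1) ^ 2 + m * (k + 1)) / qp q q ((k + 1) + m)) := by
    rw [Fa, show (n + 1) + 1 = n + 2 from rfl]
    apply sum_shift
    · rw [qbinom_zero q hq, qbinom_zero q hq]
      ring
    · rw [qbinom_self q hq, qbinom_self q hq]
    · intro j hj
      obtain ⟨b, rfl⟩ : ∃ b, n = j + b + 1 := ⟨n - j - 1, by omega⟩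
      have hp := pascal q hq j b
      rw [show j + b + 1 + 1 = j + b + 2 from by omega, hp]
      ring
  rw [key, Fa]
  rw [← Finset.sum_add_distrib]
  apply Finset.sum_congr rfl
  intro k _
  have e : qp q q (k + (m + 1)) = qp q q (k + m) * (1 - q ^ (k + m + 1)) := by
    rw [show k + (m + 1) = (k + m) + 1 from by omega]
    exact qp_succ q (k + m)
  have e2 : qp q q ((k + 1) + m) = qp q q (k + m) * (1 - q ^ (k + m + 1)) := by
    rw [show (k + 1) + m = (k + m) + 1 from by omega]
    exact qp_succ q (k + m)
  rw [e, e2]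
  have n1 := qp_ne q hq (k + m)
  have n2 := one_sub_qpow_ne q hq (k + m)
  field_simp
  ring

lemma Fa_val (q : ℂ) (hq : ‖q‖ < 1) (n : ℕ) :
    ∀ m, Fa q n m = 1 / qp q q (n + m) := by
  induction n with
  | zero =>
    intro m
    rw [Fa]
    simp [qbinom_zero q hq, qp_zero]
  | succ n ih =>
    intro m
    rw [Fa_step q hq n m, ih (m + 1), show n + (m + 1) = (n + 1) + m from by omega]

theorem stmt19 (q : ℂ) (hq0 : q ≠ 0) (hq : ‖q‖ < 1) (n : ℕ) :
    ∑ k ∈ Finset.range (n + 1), q ^ (k ^ 2) / ((qp q q k) ^ 2 * qp q q (n - k))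
      = 1 / (qp q q n) ^ 2 := by
  have key : ∀ k ∈ Finset.range (n + 1),
      q ^ (k ^ 2) / ((qp q q k) ^ 2 * qp q q (n - k))
        = (1 / qp q q n) * (qbinom q n k * q ^ (k ^ 2 + 0 * k) / qp q q (k + 0)) := by
    intro k _
    rw [qbinom]
    have n1 := qp_ne q hq k
    have n2 := qp_ne q hq (n - k)
    have n3 := qp_ne q hq n
    field_simp
    simp only [zero_mul, add_zero]
    rw [mul_div_cancel_left₀ _ n1]
  rw [Finset.sum_congr rfl key, ← Finset.mul_sum]
  have hF := Fa_val q hq n 0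
  rw [Fa] at hF
  rw [hF]
  rw [show n + 0 = n from by omega]
  have n3 := qp_ne q hq n
  field_simp
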